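/- Let r ≥ 2 and s ∈ {1,...,r+1} with r ≡ 1 (mod s), writing r = r′s + 1. For m ∈ {1,...,r−1} write m = m′s + m″ with m″ ∈ {1,...,s}, and set ℓ(m) = r′m″ − m′. Then Σ_{m=1}^{r−1} m(r−m)(r − 1 − 2ℓ(m)) = −r(r²−1)/6. -/
import Mathlib

open Finset

lemma sumMul (c : ℚ) (n : ℕ) :
    ∑ m ∈ Finset.Icc 1 n, (m : ℚ) * (c - m)
      = c * n * (n + 1) / 2 - n * (n + 1) * (2 * n + 1) / 6 := by
  induction n with
  | zero => simp
  | succ k ih =>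
    rw [Finset.sum_Icc_succ_top (by omega : 1 ≤ k + 1), ih]
    push_cast
    ring

theorem cubic_sum_case_plus (r s r' : ℕ) (hr : 2 ≤ r) (hs1 : 1 ≤ s) (hs2 : s ≤ r + 1)
    (hrs : r = r' * s + 1) :
    ∑ m ∈ Finset.Icc 1 (r - 1),
        (m : ℚ) * ((r : ℚ) - m) *
          ((r : ℚ) - 1 - 2 * ((r' : ℚ) * ((((m - 1) % s : ℕ) : ℚ) + 1)
            - (((m - 1) / s : ℕ) : ℚ))) =
      -(r : ℚ) * ((r : ℚ) ^ 2 - 1) / 6 := by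
  set f : ℕ → ℚ := fun m =>
    (m : ℚ) * ((r : ℚ) - m) *
      ((r : ℚ) - 1 - 2 * ((r' : ℚ) * ((((m - 1) % s : ℕ) : ℚ) + 1)
        - (((m - 1) / s : ℕ) : ℚ))) with hf
  -- reflection
  have hrefl : ∑ m ∈ Finset.Icc 1 (r - 1), f m = ∑ m ∈ Finset.Icc 1 (r - 1), f (r - m) := by
    refine Finset.sum_nbij' (fun m => r - m) (fun m => r - m) ?_ ?_ ?_ ?_ ?_
    · intro a ha; simp only [Finset.mem_Icc] at ha ⊢
      show 1 ≤ r - a ∧ r - a ≤ r - 1; omega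
    · intro a ha; simp only [Finset.mem_Icc] at ha ⊢
      show 1 ≤ r - a ∧ r - a ≤ r - 1; omega
    · intro a ha; simp only [Finset.mem_Icc] at ha
      show r - (r - a) = a; omega
    · intro a ha; simp only [Finset.mem_Icc] at ha
      show r - (r - a) = a; omega
    · intro a ha
      simp only [Finset.mem_Icc] at ha
      show f a = f (r - (r - a))
      congr 1
      omega
  -- pointwise key
  have key : ∀ m ∈ Finset.Icc 1 (r - 1), f m + f (r - m) = -2 * (m : ℚ) * ((r : ℚ) - m) := by
    intro m hm
    simp only [Finset.mem_Icc] at hm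
    obtain ⟨hm1, hm2⟩ := hm
    set q := (m - 1) / s with hq
    set t := (m - 1) % s with htd
    have ht : t < s := Nat.mod_lt _ hs1
    have ha0 : s * q + t = m - 1 := Nat.div_add_mod (m-1) s
    clear_value q t
    have ha : s * q + t = m - 1 := ha0
    have hm2' : m ≤ r' * s := by
      have : r - 1 = r' * s := by rw [hrs]; omega
      omega
    have hqlt : q < r' := by
      rw [hq]
      refine Nat.div_lt_of_lt_mul ?_
      rw [Nat.mul_comm]
      omega
    have hmz : (m : ℤ) - 1 = s * q + t := by
      have h := congrArg (Nat.cast : ℕ → ℤ) ha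
      push_cast [Nat.cast_sub hm1] at h
      linarith
    have hrz : (r : ℤ) = r' * s + 1 := by exact_mod_cast congrArg (Nat.cast : ℕ → ℤ) hrs
    have e1 : t ≤ s - 1 := by omega
    have e2 : q ≤ r' - 1 := by omega
    have e3 : 1 ≤ r' := by omega
    have e4 : m ≤ r := by omega
    have e5 : m + 1 ≤ r := by omega
    have e6 : 1 ≤ r - m := by omega
    have e7 : 0 < s := by omega
    have h2 : r - m - 1 = (s - 1 - t) + s * (r' - 1 - q) := by
      zify [e1, e2, e3, e4, e5, e6, hs1]
      linear_combination hrz - hmz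
    have hlt : s - 1 - t < s := by omega
    have hdiv : (r - m - 1) / s = r' - 1 - q := by
      rw [h2, Nat.add_mul_div_left _ _ e7, Nat.div_eq_of_lt hlt, Nat.zero_add]
    have hmod : (r - m - 1) % s = s - 1 - t := by
      rw [h2, Nat.add_mul_mod_self_left]
      exact Nat.mod_eq_of_lt hlt
    have hL : (r' : ℚ) * ((t : ℚ) + 1) - (q : ℚ)
        + ((r' : ℚ) * (((s - 1 - t : ℕ) : ℚ) + 1) - ((r' - 1 - q : ℕ) : ℚ)) = (r : ℚ) := by
      rw [Nat.cast_sub e1, Nat.cast_sub hs1, Nat.cast_sub e2, Nat.cast_sub e3]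
      have hrq : (r : ℚ) = r' * s + 1 := by exact_mod_cast congrArg (Nat.cast : ℕ → ℚ) hrs
      push_cast
      linear_combination -hrq
    have hmq : ((r - m : ℕ) : ℚ) = (r : ℚ) - m := by
      rw [Nat.cast_sub (by omega)]
    rw [hf]
    simp only [hdiv, hmod, hmq, ← hq, ← htd]
    have hrmq : ((r - m - 1) : ℕ) = r - m - 1 := rfl
    linear_combination (-2) * (m : ℚ) * ((r : ℚ) - m) * hL
  have hsum : (∑ m ∈ Finset.Icc 1 (r - 1), f m) + (∑ m ∈ Finset.Icc 1 (r - 1), f m)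
      = ∑ m ∈ Finset.Icc 1 (r - 1), (-2 * (m : ℚ) * ((r : ℚ) - m)) := by
    nth_rewrite 2 [hrefl]
    rw [← Finset.sum_add_distrib]
    exact Finset.sum_congr rfl key
  have hS : ∑ m ∈ Finset.Icc 1 (r - 1), (-2 * (m : ℚ) * ((r : ℚ) - m))
      = -2 * ((r : ℚ) * (r - 1) * ((r - 1) + 1) / 2
          - (r - 1) * ((r - 1) + 1) * (2 * (r - 1) + 1) / 6) := by
    have := sumMul (r : ℚ) (r - 1)
    have hc : ((r - 1 : ℕ) : ℚ) = (r : ℚ) - 1 := by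
      rw [Nat.cast_sub (by omega)]; norm_num
    calc ∑ m ∈ Finset.Icc 1 (r - 1), (-2 * (m : ℚ) * ((r : ℚ) - m))
        = -2 * ∑ m ∈ Finset.Icc 1 (r - 1), (m : ℚ) * ((r : ℚ) - m) := by
          rw [Finset.mul_sum]; apply Finset.sum_congr rfl; intros; ring
      _ = _ := by rw [this, hc]
  rw [hf] at hsum
  rw [hS] at hsum
  linear_combination hsum / 2
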